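/- Let a, b, p, x be real numbers with 0 < a < p, 0 < b < p and x > 0, and set q = e^{-x}. Then R(a,b,p;e^{-x}) = exp( -x((a²-b²)/(2p) - (a-b)/2) - ∑_{n=1}^∞ (1/n) · (e^{anx} + e^{(p-a)nx} - e^{(p-b)nx} - e^{bnx}) / (e^{pnx} - 1) ). -/

import Mathlib

open Real

/-- The q-Pochhammer infinite product `(a;q)_∞ = ∏_{n=0}^∞ (1 - a qⁿ)`. -/
noncomputable def qPoch (a q : ℝ) : ℝ := ∏' n : ℕ, (1 - a * q ^ n)

/-- The "Agile" `[a,p;q] = (q^{p-a};q^p)_∞ (q^a;q^p)_∞`. -/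
noncomputable def agile (a p q : ℝ) : ℝ :=
  qPoch (q ^ (p - a)) (q ^ p) * qPoch (q ^ a) (q ^ p)

/-- The Ramanujan quantity `R*(a,b,p;q) = [a,p;q]/[b,p;q]`. -/
noncomputable def Rstar (a b p q : ℝ) : ℝ := agile a p q / agile b p q

/-- `R(a,b,p;q) = q^{-(a-b)/2 + (a²-b²)/(2p)} R*(a,b,p;q)`. -/
noncomputable def RQ (a b p q : ℝ) : ℝ :=
  q ^ (-(a - b) / 2 + (a ^ 2 - b ^ 2) / (2 * p)) * Rstar a b p q

set_option maxHeartbeats 1000000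

variable {t s : ℝ}

lemma summable_tpow (ht0 : 0 ≤ t) (ht1 : t < 1) : Summable (fun k : ℕ => t ^ (k + 1)) := by
  have := (summable_geometric_of_lt_one ht0 ht1).mul_left t
  refine this.congr fun k => ?_
  rw [pow_succ, mul_comm]

lemma summable_unc (ht0 : 0 ≤ t) (ht1 : t < 1) (hs0 : 0 ≤ s) (hs1 : s < 1) :
    Summable (Function.uncurry fun n k : ℕ => (t * s ^ n) ^ (k + 1) / (k + 1)) := by
  have hmaj : Summable (fun x : ℕ × ℕ => s ^ x.1 * t ^ (x.2 + 1)) :=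
    (summable_geometric_of_lt_one hs0 hs1).mul_of_nonneg (summable_tpow ht0 ht1)
      (fun n => pow_nonneg hs0 n) (fun k => pow_nonneg ht0 _)
  refine Summable.of_nonneg_of_le (fun x => ?_) (fun x => ?_) hmaj
  · exact div_nonneg (pow_nonneg (mul_nonneg ht0 (pow_nonneg hs0 _)) _) (by positivity)
  · obtain ⟨n, k⟩ := x
    show (t * s ^ n) ^ (k + 1) / ((k : ℝ) + 1) ≤ s ^ n * t ^ (k + 1)
    have h1 : (t * s ^ n) ^ (k + 1) / ((k : ℝ) + 1) ≤ (t * s ^ n) ^ (k + 1) := by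
      apply div_le_self (pow_nonneg (mul_nonneg ht0 (pow_nonneg hs0 _)) _)
      have : (0:ℝ) ≤ k := Nat.cast_nonneg k
      linarith
    refine h1.trans ?_
    rw [mul_pow, mul_comm]
    apply mul_le_mul_of_nonneg_right _ (pow_nonneg ht0 _)
    rw [← pow_mul]
    apply pow_le_pow_of_le_one hs0 hs1.le
    nlinarith [Nat.one_le_iff_ne_zero.mpr (Nat.succ_ne_zero k)]

lemma hrow (ht0 : 0 ≤ t) (ht1 : t < 1) (hs0 : 0 ≤ s) (hs1 : s < 1) (n : ℕ) :
    HasSum (fun k : ℕ => (t * s ^ n) ^ (k + 1) / (k + 1)) (-Real.log (1 - t * s ^ n)) := by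
  apply hasSum_pow_div_log_of_abs_lt_one
  rw [abs_of_nonneg (mul_nonneg ht0 (pow_nonneg hs0 n))]
  calc t * s ^ n ≤ t * 1 := by
        apply mul_le_mul_of_nonneg_left _ ht0
        exact pow_le_one₀ hs0 hs1.le
    _ < 1 := by linarith

lemma g_eq (n k : ℕ) :
    (t * s ^ n) ^ (k + 1) / ((k : ℝ) + 1) = t ^ (k + 1) / ((k : ℝ) + 1) * (s ^ (k + 1)) ^ n := by
  rw [mul_pow, ← pow_mul, mul_comm n (k + 1), pow_mul]
  ring

lemma summable_col (ht0 : 0 ≤ t) (hs0 : 0 ≤ s) (hs1 : s < 1) (k : ℕ) :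
    Summable (fun n : ℕ => (t * s ^ n) ^ (k + 1) / ((k : ℝ) + 1)) := by
  have : Summable (fun n : ℕ => t ^ (k + 1) / ((k : ℝ) + 1) * (s ^ (k + 1)) ^ n) :=
    (summable_geometric_of_lt_one (pow_nonneg hs0 _)
      (pow_lt_one₀ hs0 hs1 (Nat.succ_ne_zero k))).mul_left _
  exact this.congr fun n => (g_eq n k).symm

lemma col_sum (ht0 : 0 ≤ t) (hs0 : 0 ≤ s) (hs1 : s < 1) (k : ℕ) :
    ∑' n : ℕ, (t * s ^ n) ^ (k + 1) / ((k : ℝ) + 1)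
      = t ^ (k + 1) / (((k : ℝ) + 1) * (1 - s ^ (k + 1))) := by
  rw [tsum_congr (fun n => g_eq n k), tsum_mul_left,
    tsum_geometric_of_lt_one (pow_nonneg hs0 _) (pow_lt_one₀ hs0 hs1 (Nat.succ_ne_zero k))]
  field_simp

lemma tsum_log_eq (ht0 : 0 ≤ t) (ht1 : t < 1) (hs0 : 0 ≤ s) (hs1 : s < 1) :
    ∑' n : ℕ, Real.log (1 - t * s ^ n)
      = -∑' k : ℕ, t ^ (k + 1) / (((k : ℝ) + 1) * (1 - s ^ (k + 1))) := by
  have habs := summable_unc ht0 ht1 hs0 hs1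
  have hfib : HasSum (fun n : ℕ => -Real.log (1 - t * s ^ n))
      (∑' p : ℕ × ℕ, (t * s ^ p.1) ^ (p.2 + 1) / ((p.2 : ℝ) + 1)) :=
    HasSum.prod_fiberwise habs.hasSum (fun n => hrow ht0 ht1 hs0 hs1 n)
  have h1 : ∑' n : ℕ, Real.log (1 - t * s ^ n)
      = -∑' p : ℕ × ℕ, (t * s ^ p.1) ^ (p.2 + 1) / ((p.2 : ℝ) + 1) := by
    have := hfib.tsum_eq
    rw [tsum_neg] at this
    linarith
  rw [h1]
  congr 1
  have h2 : ∑' p : ℕ × ℕ, (t * s ^ p.1) ^ (p.2 + 1) / ((p.2 : ℝ) + 1)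
      = ∑' (n : ℕ) (k : ℕ), (t * s ^ n) ^ (k + 1) / ((k : ℝ) + 1) :=
    Summable.tsum_prod' habs (fun n => (hrow ht0 ht1 hs0 hs1 n).summable)
  have h3 : (∑' (k : ℕ) (n : ℕ), (t * s ^ n) ^ (k + 1) / ((k : ℝ) + 1))
      = ∑' (n : ℕ) (k : ℕ), (t * s ^ n) ^ (k + 1) / ((k : ℝ) + 1) :=
    Summable.tsum_comm' habs (fun n => (hrow ht0 ht1 hs0 hs1 n).summable)
      (fun k => summable_col ht0 hs0 hs1 k)
  rw [h2, ← h3]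
  exact tsum_congr fun k => col_sum ht0 hs0 hs1 k

lemma qPoch_eq_exp (ht0 : 0 ≤ t) (ht1 : t < 1) (hs0 : 0 ≤ s) (hs1 : s < 1) :
    qPoch t s = Real.exp (-∑' k : ℕ, t ^ (k + 1) / (((k : ℝ) + 1) * (1 - s ^ (k + 1)))) := by
  have hpos : ∀ n : ℕ, 0 < 1 - t * s ^ n := by
    intro n
    have : t * s ^ n ≤ t * 1 := mul_le_mul_of_nonneg_left (pow_le_one₀ hs0 hs1.le) ht0
    linarith
  have hsl : Summable fun n : ℕ => Real.log (1 - t * s ^ n) := by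
    have habs := summable_unc ht0 ht1 hs0 hs1
    have hfib : HasSum (fun n : ℕ => -Real.log (1 - t * s ^ n))
        (∑' p : ℕ × ℕ, (t * s ^ p.1) ^ (p.2 + 1) / ((p.2 : ℝ) + 1)) :=
      HasSum.prod_fiberwise habs.hasSum (fun n => hrow ht0 ht1 hs0 hs1 n)
    simpa using hfib.summable.neg
  have := Real.rexp_tsum_eq_tprod (f := fun n : ℕ => 1 - t * s ^ n) hpos hsl
  rw [qPoch, ← this, tsum_log_eq ht0 ht1 hs0 hs1]

lemma summable_S (ht0 : 0 ≤ t) (ht1 : t < 1) (hs0 : 0 ≤ s) (hs1 : s < 1) :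
    Summable (fun k : ℕ => t ^ (k + 1) / (((k : ℝ) + 1) * (1 - s ^ (k + 1)))) := by
  have hD : ∀ k : ℕ, (1 - s) ≤ ((k : ℝ) + 1) * (1 - s ^ (k + 1)) := by
    intro k
    have h1 : s ^ (k + 1) ≤ s := by
      calc s ^ (k + 1) ≤ s ^ 1 := pow_le_pow_of_le_one hs0 hs1.le (by omega)
        _ = s := pow_one s
    have h2 : (1:ℝ) ≤ (k : ℝ) + 1 := by
      have := Nat.cast_nonneg (α := ℝ) k; linarith
    nlinarith
  refine Summable.of_nonneg_of_le (fun k => ?_) (fun k => ?_)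
    ((summable_tpow ht0 ht1).mul_right (1 - s)⁻¹)
  · have : 0 < 1 - s ^ (k + 1) := by
      have : s ^ (k+1) < 1 := pow_lt_one₀ hs0 hs1 (by omega)
      linarith
    positivity
  · rw [div_eq_mul_inv, mul_comm (t ^ (k+1)) _, mul_comm (t ^ (k+1)) _]
    apply mul_le_mul_of_nonneg_right _ (pow_nonneg ht0 _)
    apply inv_anti₀ (by linarith) (hD k)

lemma frac_eq {u v m : ℝ} (hm : 0 < m) (hv : 0 < v) :
    Real.exp (-u) / (m * (1 - Real.exp (-v)))
      = (1 / m) * (Real.exp (v - u) / (Real.exp v - 1)) := by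
  have hE1 : 1 < Real.exp v := Real.one_lt_exp_iff.2 hv
  have key : Real.exp (v - u) = Real.exp v * Real.exp (-u) := by
    rw [← Real.exp_add]; ring_nf
  rw [key, Real.exp_neg v]
  have h1 : Real.exp v ≠ 0 := (Real.exp_pos v).ne'
  have h2 : Real.exp v - 1 ≠ 0 := by linarith
  field_simp

lemma keyterm (a b p x : ℝ) (ha0 : 0 < a) (hap : a < p) (hb0 : 0 < b) (hbp : b < p)
    (hx : 0 < x) (k : ℕ) :
    Real.exp (-(x * (p - a))) ^ (k + 1) / (((k : ℝ) + 1) * (1 - Real.exp (-(x * p)) ^ (k + 1)))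
      + Real.exp (-(x * a)) ^ (k + 1) / (((k : ℝ) + 1) * (1 - Real.exp (-(x * p)) ^ (k + 1)))
      - (Real.exp (-(x * (p - b))) ^ (k + 1) / (((k : ℝ) + 1) * (1 - Real.exp (-(x * p)) ^ (k + 1)))
      + Real.exp (-(x * b)) ^ (k + 1) / (((k : ℝ) + 1) * (1 - Real.exp (-(x * p)) ^ (k + 1))))
      = (1 / (↑(k + 1) : ℝ)) *
          (Real.exp (a * (↑(k + 1) : ℝ) * x) + Real.exp ((p - a) * (↑(k + 1) : ℝ) * x) -
            Real.exp ((p - b) * (↑(k + 1) : ℝ) * x) - Real.exp (b * (↑(k + 1) : ℝ) * x)) /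
          (Real.exp (p * (↑(k + 1) : ℝ) * x) - 1) := by
  set m : ℝ := (k : ℝ) + 1 with hm
  have hm0 : 0 < m := by positivity
  have hcast : (↑(k + 1) : ℝ) = m := by push_cast; rfl
  have hpow : ∀ c : ℝ, Real.exp (-(x * c)) ^ (k + 1) = Real.exp (-(c * m * x)) := by
    intro c
    rw [← Real.exp_nat_mul]
    congr 1
    rw [hcast]; ring
  have hfrac : ∀ c : ℝ, Real.exp (-(c * m * x)) / (m * (1 - Real.exp (-(p * m * x))))
      = (1 / m) * (Real.exp ((p - c) * m * x) / (Real.exp (p * m * x) - 1)) := by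
    intro c
    have hp0 : 0 < p := ha0.trans hap
    have := frac_eq (u := c * m * x) (v := p * m * x) hm0 (mul_pos (mul_pos hp0 hm0) hx)
    rw [this]
    congr 2
    ring
  rw [hpow, hpow, hpow, hpow, hpow, hcast]
  rw [hfrac, hfrac, hfrac, hfrac]
  have h1 : p - (p - a) = a := by ring
  have h2 : p - (p - b) = b := by ring
  rw [h1, h2]
  ring


/-- Theorem 3, second equality: for `0 < a < p`, `0 < b < p` and `x > 0`,
`R(a,b,p;e^{-x}) = exp(-x((a²-b²)/(2p) - (a-b)/2)
  - ∑_{n=1}^∞ (1/n)(e^{anx} + e^{(p-a)nx} - e^{(p-b)nx} - e^{bnx})/(e^{pnx}-1))`. -/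
theorem ramanujan_quantity_exp_series (a b p x : ℝ)
    (ha0 : 0 < a) (hap : a < p) (hb0 : 0 < b) (hbp : b < p) (hx : 0 < x) :
    RQ a b p (Real.exp (-x)) =
      Real.exp (-x * ((a ^ 2 - b ^ 2) / (2 * p) - (a - b) / 2) -
        ∑' n : ℕ, (1 / (↑(n + 1) : ℝ)) *
          (Real.exp (a * (↑(n + 1) : ℝ) * x) +
            Real.exp ((p - a) * (↑(n + 1) : ℝ) * x) -
            Real.exp ((p - b) * (↑(n + 1) : ℝ) * x) -
            Real.exp (b * (↑(n + 1) : ℝ) * x)) /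
          (Real.exp (p * (↑(n + 1) : ℝ) * x) - 1)) := by
  have hp0 : 0 < p := ha0.trans hap
  have hq : ∀ c : ℝ, Real.exp (-x) ^ c = Real.exp (-(x * c)) := by
    intro c
    rw [Real.rpow_def_of_pos (Real.exp_pos _), Real.log_exp]
    ring_nf
  have hge : ∀ c : ℝ, (0:ℝ) ≤ Real.exp (-(x * c)) := fun c => (Real.exp_pos _).le
  have hlt : ∀ c : ℝ, 0 < c → Real.exp (-(x * c)) < 1 := by
    intro c hc
    rw [Real.exp_lt_one_iff]
    nlinarith
  -- the exponential series attached to each parameter c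
  set S : ℝ → ℝ := fun c => ∑' k : ℕ,
    Real.exp (-(x * c)) ^ (k + 1) / (((k : ℝ) + 1) * (1 - Real.exp (-(x * p)) ^ (k + 1))) with hS
  have hSsumm : ∀ c : ℝ, 0 < c → Summable (fun k : ℕ =>
      Real.exp (-(x * c)) ^ (k + 1) / (((k : ℝ) + 1) * (1 - Real.exp (-(x * p)) ^ (k + 1)))) :=
    fun c hc => summable_S (hge c) (hlt c hc) (hge p) (hlt p hp0)
  have hag : ∀ c : ℝ, 0 < c → c < p →
      agile c p (Real.exp (-x)) = Real.exp (-(S (p - c) + S c)) := by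
    intro c h0 h1
    rw [agile, hq, hq, hq,
      qPoch_eq_exp (hge _) (hlt _ (by linarith)) (hge _) (hlt _ hp0),
      qPoch_eq_exp (hge _) (hlt _ h0) (hge _) (hlt _ hp0), ← Real.exp_add]
    congr 1
    rw [hS]
    ring
  have hR : Rstar a b p (Real.exp (-x)) =
      Real.exp ((S (p - b) + S b) - (S (p - a) + S a)) := by
    rw [Rstar, hag a ha0 hap, hag b hb0 hbp, ← Real.exp_sub]
    congr 1
    ring
  have hsum : S (p - a) + S a - (S (p - b) + S b) =
      ∑' n : ℕ, (1 / (↑(n + 1) : ℝ)) *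
          (Real.exp (a * (↑(n + 1) : ℝ) * x) +
            Real.exp ((p - a) * (↑(n + 1) : ℝ) * x) -
            Real.exp ((p - b) * (↑(n + 1) : ℝ) * x) -
            Real.exp (b * (↑(n + 1) : ℝ) * x)) /
          (Real.exp (p * (↑(n + 1) : ℝ) * x) - 1) := by
    rw [hS]
    rw [← Summable.tsum_add (hSsumm (p - a) (by linarith)) (hSsumm a ha0),
      ← Summable.tsum_add (hSsumm (p - b) (by linarith)) (hSsumm b hb0),
      ← Summable.tsum_sub (((hSsumm (p - a) (by linarith)).add (hSsumm a ha0)))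
        (((hSsumm (p - b) (by linarith)).add (hSsumm b hb0)))]
    exact tsum_congr fun k => keyterm a b p x ha0 hap hb0 hbp hx k
  rw [RQ, hR, hq, ← Real.exp_add, ← hsum]
  congr 1
  ring
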